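/- Let $k$ be a field with $\mathrm{char}\,k \neq 2$ and let $\Lambda$ be the exterior algebra on $n \geq 2$ generators $x_1,\dots,x_n$ over $k$ (the quotient of the free algebra by the relations $x_i^2 = 0$ and $x_i x_j + x_j x_i = 0$ for $i < j$). Then the commutator subspace $[\Lambda,\Lambda]$ (spanned by all $ab - ba$) has dimension $2^{n-1} - 1$, and consequently $\dim_k \Lambda/[\Lambda,\Lambda] = 2^{n-1} + 1$. -/

import Mathlib

open ExteriorAlgebra

namespace ExtComm

variable {k : Type} [Field k] {n : ℕ}

/-- Model space: functions on finsets. -/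
abbrev V (k : Type) [Field k] (n : ℕ) := Finset (Fin n) → k

def sgn (k : Type) [Field k] (i : Fin n) (T : Finset (Fin n)) : k :=
  (-1 : k) ^ (T.filter (· < i)).card

/-- Annihilation-style operator on the model space. -/
def c (i : Fin n) : V k n →ₗ[k] V k n where
  toFun f T := if i ∈ T then sgn k i T * f (T.erase i) else 0
  map_add' f g := by
    funext T; by_cases h : i ∈ T <;> simp [h, mul_add]
  map_smul' r f := by
    funext T; by_cases h : i ∈ T <;> simp [h]
    ring

lemma c_c (i : Fin n) (f : V k n) : c i (c (k := k) i f) = 0 := by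
  funext T
  by_cases h : i ∈ T <;> simp [c, h, Finset.notMem_erase]

lemma c_anticomm (i j : Fin n) (f : V k n) :
    c i (c (k := k) j f) + c j (c i f) = 0 := by
  rcases eq_or_ne i j with rfl | hij
  · rw [c_c]; simp
  funext T
  by_cases hi : i ∈ T
  · by_cases hj : j ∈ T
    · have hij' : j ∈ T.erase i := Finset.mem_erase.2 ⟨hij.symm, hj⟩
      have hji' : i ∈ T.erase j := Finset.mem_erase.2 ⟨hij, hi⟩
      have herase : (T.erase i).erase j = (T.erase j).erase i := Finset.erase_right_comm
      have key : sgn k i T * sgn k j (T.erase i) + sgn k j T * sgn k i (T.erase j) = 0 := by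
        rcases lt_or_gt_of_ne hij with h | h
        · -- i < j
          have h1 : sgn k i (T.erase j) = sgn k i T := by
            unfold sgn
            congr 1
            rw [Finset.filter_erase]
            rw [Finset.erase_eq_of_notMem]
            simp [not_lt_of_gt h]
          have h2 : sgn k j T = - sgn k j (T.erase i) := by
            unfold sgn
            rw [Finset.filter_erase]
            have hmem : i ∈ T.filter (· < j) := Finset.mem_filter.2 ⟨hi, h⟩
            rw [Finset.card_erase_of_mem hmem]
            have hc : 0 < (T.filter (· < j)).card := Finset.card_pos.2 ⟨i, hmem⟩
            obtain ⟨m, hm⟩ : ∃ m, (T.filter (· < j)).card = m + 1 :=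
              ⟨_, (Nat.succ_pred_eq_of_pos hc).symm⟩
            rw [hm]
            simp [pow_succ]
          rw [h1, h2]; ring
        · -- j < i
          have h1 : sgn k j (T.erase i) = sgn k j T := by
            unfold sgn
            congr 1
            rw [Finset.filter_erase]
            rw [Finset.erase_eq_of_notMem]
            simp [not_lt_of_gt h]
          have h2 : sgn k i T = - sgn k i (T.erase j) := by
            unfold sgn
            rw [Finset.filter_erase]
            have hmem : j ∈ T.filter (· < i) := Finset.mem_filter.2 ⟨hj, h⟩
            rw [Finset.card_erase_of_mem hmem]
            have hc : 0 < (T.filter (· < i)).card := Finset.card_pos.2 ⟨j, hmem⟩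
            obtain ⟨m, hm⟩ : ∃ m, (T.filter (· < i)).card = m + 1 :=
              ⟨_, (Nat.succ_pred_eq_of_pos hc).symm⟩
            rw [hm]
            simp [pow_succ]
          rw [h1, h2]; ring
      simp only [c, LinearMap.coe_mk, AddHom.coe_mk, Pi.add_apply, hi, hj, if_pos, hij', hji',
        herase]
      rw [← mul_assoc, ← mul_assoc, ← add_mul]
      rw [show sgn k i T * sgn k j (T.erase i) + sgn k j T * sgn k i (T.erase j) = 0 from key]
      simp
    · have hj' : j ∉ T.erase i := fun h => hj (Finset.mem_of_mem_erase h)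
      simp [c, hi, hj, hj']
  · by_cases hj : j ∈ T
    · have hi' : i ∉ T.erase j := fun h => hi (Finset.mem_of_mem_erase h)
      simp [c, hi, hj, hi']
    · simp [c, hi, hj]

/-- The linear map sending a vector to its creation operator. -/
def aOp : (Fin n → k) →ₗ[k] Module.End k (V k n) where
  toFun v := ∑ i, v i • c i
  map_add' v w := by simp [add_smul, Finset.sum_add_distrib]
  map_smul' r v := by simp [smul_smul, Finset.smul_sum]

lemma aOp_sq (v : Fin n → k) : aOp (k := k) v * aOp v = 0 := by
  unfold aOp
  simp only [LinearMap.coe_mk, AddHom.coe_mk, Finset.sum_mul_sum]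
  rw [← Finset.sum_product']
  have hcc : ∀ i j : Fin n, (c i * c j : Module.End k (V k n)) + c j * c i = 0 := by
    intro i j
    apply LinearMap.ext
    intro f
    simpa only [LinearMap.add_apply, Module.End.mul_apply, LinearMap.zero_apply] using
      c_anticomm i j f
  apply Finset.sum_ninvolution (fun p => (p.2, p.1))
  · rintro ⟨i, j⟩
    show (v i • c i) * (v j • c j) + (v j • c j) * (v i • c i) = 0
    rw [smul_mul_smul_comm, smul_mul_smul_comm, mul_comm (v j) (v i), ← smul_add, hcc, smul_zero]
  · rintro ⟨i, j⟩ hfp heq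
    have hji : j = i := congrArg Prod.fst heq
    cases hji
    apply hfp
    show (v i • c i) * (v i • c i) = 0
    rw [smul_mul_smul_comm]
    have h0 : (c i * c i : Module.End k (V k n)) = 0 := by
      apply LinearMap.ext
      intro f
      simpa only [Module.End.mul_apply, LinearMap.zero_apply] using c_c i f
    rw [h0, smul_zero]
  · intro p; simp
  · intro p; simp


/-- The representation of the exterior algebra on the model space. -/
def rho : ExteriorAlgebra k (Fin n → k) →ₐ[k] Module.End k (V k n) :=
  ExteriorAlgebra.lift k ⟨aOp, aOp_sq⟩

/-- The generators of the exterior algebra. -/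
def gen (k : Type) [Field k] (i : Fin n) : ExteriorAlgebra k (Fin n → k) :=
  ExteriorAlgebra.ι k (Pi.single i (1 : k))

/-- Basis vectors of the model space. -/
def e (k : Type) [Field k] (S : Finset (Fin n)) : V k n := Pi.single S 1

lemma rho_gen (i : Fin n) : rho (gen k i) = c i := by
  rw [gen, rho, ExteriorAlgebra.lift_ι_apply]
  unfold aOp
  simp only [LinearMap.coe_mk, AddHom.coe_mk]
  rw [Finset.sum_eq_single i]
  · simp
  · intro j _ hj
    rw [Pi.single_eq_of_ne hj, zero_smul]
  · simp

lemma c_e_not_mem {i : Fin n} {S : Finset (Fin n)} (h : i ∉ S) :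
    c i (e k S) = sgn k i S • e k (insert i S) := by
  funext T
  show (if i ∈ T then sgn k i T * e k S (T.erase i) else 0) = sgn k i S • e k (insert i S) T
  by_cases hiT : i ∈ T
  · rw [if_pos hiT]
    by_cases hTS : T.erase i = S
    · have hT : T = insert i S := by
        rw [← hTS, Finset.insert_erase hiT]
      subst hT
      rw [hTS]
      have hsgn : sgn k i (insert i S) = sgn k i S := by
        unfold sgn
        congr 2
        rw [Finset.filter_insert, if_neg (lt_irrefl i)]
      simp [e, hsgn]
    · have hT : T ≠ insert i S := by
        intro hT
        apply hTS
        rw [hT, Finset.erase_insert h]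
      simp [e, Pi.single_apply, hTS, hT]
  · rw [if_neg hiT]
    have hT : T ≠ insert i S := fun hT => hiT (hT ▸ Finset.mem_insert_self i S)
    simp [e, Pi.single_apply, hT]

lemma c_e_mem {i : Fin n} {S : Finset (Fin n)} (h : i ∈ S) :
    c i (e k S) = 0 := by
  funext T
  show (if i ∈ T then sgn k i T * e k S (T.erase i) else 0) = 0
  by_cases hiT : i ∈ T
  · rw [if_pos hiT]
    have hTS : T.erase i ≠ S := by
      intro hTS
      exact Finset.notMem_erase i T (hTS ▸ h)
    simp [e, Pi.single_apply, hTS]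
  · rw [if_neg hiT]

/-- Monomials in the exterior algebra indexed by lists. -/
def mon (k : Type) [Field k] (l : List (Fin n)) : ExteriorAlgebra k (Fin n → k) :=
  (l.map (gen k)).prod

@[simp] lemma mon_nil : mon k ([] : List (Fin n)) = 1 := rfl

lemma mon_cons (i : Fin n) (l : List (Fin n)) :
    mon k (i :: l) = gen k i * mon k l := by
  simp [mon]

lemma mon_append (l m : List (Fin n)) :
    mon k (l ++ m) = mon k l * mon k m := by
  simp [mon]

/-- Basis monomials indexed by finsets. -/
def bS (k : Type) [Field k] (S : Finset (Fin n)) : ExteriorAlgebra k (Fin n → k) :=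
  mon k (S.sort (· ≤ ·))

lemma bS_empty : bS k (∅ : Finset (Fin n)) = 1 := by
  rw [bS, Finset.sort_empty, mon_nil]

lemma rho_mon_sorted : ∀ l : List (Fin n), l.Pairwise (· < ·) →
    rho (mon k l) (e k ∅) = e k l.toFinset
  | [], _ => by simp [e, map_one]
  | i :: t, h => by
    have ht : t.Pairwise (· < ·) := h.of_cons
    have hlt : ∀ j ∈ t.toFinset, i < j := by
      intro j hj
      exact List.rel_of_pairwise_cons h (List.mem_toFinset.1 hj)
    rw [mon_cons, map_mul]
    simp only [Module.End.mul_apply]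
    rw [rho_mon_sorted t ht, rho_gen]
    have hnotmem : i ∉ t.toFinset := fun hmem => lt_irrefl i (hlt i hmem)
    rw [c_e_not_mem hnotmem]
    have hsgn : sgn k i t.toFinset = 1 := by
      unfold sgn
      have : t.toFinset.filter (· < i) = ∅ := by
        apply Finset.filter_eq_empty_iff.2
        intro j hj
        exact not_lt_of_gt (hlt j hj)
      rw [this]
      simp
    rw [hsgn, one_smul, List.toFinset_cons]

lemma rho_bS (S : Finset (Fin n)) : rho (bS k S) (e k ∅) = e k S := by
  rw [bS, rho_mon_sorted _ (Finset.sortedLT_sort S).pairwise, Finset.sort_toFinset]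

/-- Evaluation at the vacuum. -/
def theta : ExteriorAlgebra k (Fin n → k) →ₗ[k] V k n where
  toFun x := rho x (e k ∅)
  map_add' x y := by simp
  map_smul' r x := by simp

lemma linearIndependent_bS : LinearIndependent k (bS k (n := n)) := by
  apply LinearIndependent.of_comp theta
  have he : (theta (k := k) (n := n)) ∘ bS k = fun S => e k S := by
    funext S
    exact rho_bS S
  rw [he]
  have : (fun S : Finset (Fin n) => e k S) = ⇑(Pi.basisFun k (Finset (Fin n))) := by
    funext S
    rw [Pi.basisFun_apply, e]
  rw [this]
  exact (Pi.basisFun k (Finset (Fin n))).linearIndependent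


lemma ι_anticomm (x y : Fin n → k) :
    ExteriorAlgebra.ι k x * ExteriorAlgebra.ι k y = -(ExteriorAlgebra.ι k y * ExteriorAlgebra.ι k x) :=
  eq_neg_of_add_eq_zero_left (ExteriorAlgebra.ι_add_mul_swap x y)

lemma gen_anticomm (i j : Fin n) : gen k i * gen k j = -(gen k j * gen k i) :=
  ι_anticomm _ _

lemma gen_sq (i : Fin n) : gen k i * gen k i = 0 := ExteriorAlgebra.ι_sq_zero _

/-- Moving a generator across a monomial. -/
lemma gen_mul_mon (i : Fin n) : ∀ l : List (Fin n),
    gen k i * mon k l = ((-1 : k) ^ l.length) • (mon k l * gen k i)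
  | [] => by simp
  | j :: t => by
    rw [mon_cons, ← mul_assoc, gen_anticomm i j, neg_mul, mul_assoc, gen_mul_mon i t,
      mul_smul_comm, ← mul_assoc, List.length_cons, pow_succ]
    rw [← neg_smul]
    congr 1
    ring

/-- Supercommutation of monomials. -/
lemma mon_mul_mon (m : List (Fin n)) : ∀ l : List (Fin n),
    mon k l * mon k m = ((-1 : k) ^ (l.length * m.length)) • (mon k m * mon k l)
  | [] => by simp
  | j :: t => by
    rw [mon_cons, mul_assoc, mon_mul_mon m t, mul_smul_comm, ← mul_assoc, gen_mul_mon j m,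
      smul_mul_assoc, smul_smul, mul_assoc, ← mon_cons, ← pow_add, List.length_cons]
    have harith : t.length * m.length + m.length = (t.length + 1) * m.length := by ring
    rw [harith]

lemma gen_mul_mon_mem (i : Fin n) : ∀ l : List (Fin n), i ∈ l →
    gen k i * mon k l = 0
  | j :: t, h => by
    rcases List.mem_cons.1 h with rfl | h
    · rw [mon_cons, ← mul_assoc, gen_sq, zero_mul]
    · rw [mon_cons, ← mul_assoc, gen_anticomm i j, neg_mul, mul_assoc,
        gen_mul_mon_mem i t h, mul_zero, neg_zero]

lemma gen_mul_mon_not_mem (i : Fin n) : ∀ l : List (Fin n), i ∉ l →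
    ∃ ε : k, (ε = 1 ∨ ε = -1) ∧
      gen k i * mon k l = ε • mon k (List.orderedInsert (· ≤ ·) i l)
  | [], _ => ⟨1, Or.inl rfl, by simp [mon_cons]⟩
  | j :: t, h => by
    have hij : i ≠ j := fun hij => h (hij ▸ (List.mem_cons_self (a := i) (l := t)))
    have hit : i ∉ t := fun hit => h (List.mem_cons_of_mem j hit)
    by_cases hle : i ≤ j
    · exact ⟨1, Or.inl rfl, by
        rw [List.orderedInsert, if_pos hle, one_smul]
        simp [mon_cons]⟩
    · obtain ⟨ε, hε, hmul⟩ := gen_mul_mon_not_mem i t hit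
      refine ⟨-ε, ?_, ?_⟩
      · rcases hε with rfl | rfl
        · exact Or.inr rfl
        · exact Or.inl (neg_neg 1)
      · rw [List.orderedInsert, if_neg hle, mon_cons, ← mul_assoc, gen_anticomm i j,
          neg_mul, mul_assoc, hmul, mul_smul_comm, ← mon_cons, ← neg_smul]

lemma sort_insert' {i : Fin n} {S : Finset (Fin n)} (h : i ∉ S) :
    (insert i S).sort (· ≤ ·) = List.orderedInsert (· ≤ ·) i (S.sort (· ≤ ·)) := by
  have h1 : List.Perm (List.orderedInsert (· ≤ ·) i (S.sort (· ≤ ·))) (i :: S.sort (· ≤ ·)) :=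
    List.perm_orderedInsert _ i _
  have h2 : List.Perm ((insert i S).sort (· ≤ ·)) (i :: S.sort (· ≤ ·)) := by
    rw [← Multiset.coe_eq_coe, ← Multiset.cons_coe, Finset.sort_eq, Finset.sort_eq,
      Finset.insert_val, Multiset.ndinsert_of_notMem h]
  exact List.Perm.eq_of_pairwise' (Finset.pairwise_sort _ _)
    (List.Pairwise.orderedInsert i _ (Finset.pairwise_sort _ _)) (h2.trans h1.symm)

lemma gen_mul_bS_mem {i : Fin n} {S : Finset (Fin n)} (h : i ∈ S) :
    gen k i * bS k S = 0 :=
  gen_mul_mon_mem i _ ((Finset.mem_sort (α := Fin n) (· ≤ ·)).2 h)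

lemma gen_mul_bS_not_mem {i : Fin n} {S : Finset (Fin n)} (h : i ∉ S) :
    ∃ ε : k, (ε = 1 ∨ ε = -1) ∧ gen k i * bS k S = ε • bS k (insert i S) := by
  obtain ⟨ε, hε, hmul⟩ := gen_mul_mon_not_mem (k := k) i (S.sort (· ≤ ·))
    (fun hmem => h ((Finset.mem_sort (α := Fin n) (· ≤ ·)).1 hmem))
  exact ⟨ε, hε, by rw [bS, hmul, bS, sort_insert' h]⟩

lemma mon_nodup : ∀ l : List (Fin n), l.Nodup →
    ∃ ε : k, (ε = 1 ∨ ε = -1) ∧ mon k l = ε • bS k l.toFinset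
  | [], _ => ⟨1, Or.inl rfl, by rw [List.toFinset_nil, bS_empty, mon_nil, one_smul]⟩
  | i :: t, h => by
    have hit : i ∉ t := (List.nodup_cons.1 h).1
    have ht : t.Nodup := (List.nodup_cons.1 h).2
    obtain ⟨ε, hε, hmon⟩ := mon_nodup t ht
    have hitf : i ∉ t.toFinset := fun hm => hit (List.mem_toFinset.1 hm)
    obtain ⟨ε', hε', hmul⟩ := gen_mul_bS_not_mem (k := k) hitf
    refine ⟨ε * ε', ?_, ?_⟩
    · rcases hε with rfl | rfl <;> rcases hε' with rfl | rfl <;> simp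
    · rw [mon_cons, hmon, mul_smul_comm, hmul, smul_smul, List.toFinset_cons]

lemma mon_not_nodup : ∀ l : List (Fin n), ¬l.Nodup → mon k l = 0
  | i :: t, h => by
    by_cases hit : i ∈ t
    · rw [mon_cons, gen_mul_mon_mem i t hit]
    · have ht : ¬t.Nodup := fun ht => h (List.nodup_cons.2 ⟨hit, ht⟩)
      rw [mon_cons, mon_not_nodup t ht, mul_zero]
  | [], h => absurd List.nodup_nil h

lemma bS_mul_bS_disjoint {S T : Finset (Fin n)} (h : Disjoint S T) :
    ∃ ε : k, (ε = 1 ∨ ε = -1) ∧ bS k S * bS k T = ε • bS k (S ∪ T) := by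
  have happ : bS k S * bS k T = mon k (S.sort (· ≤ ·) ++ T.sort (· ≤ ·)) := by
    rw [mon_append, bS, bS]
  have hnd : (S.sort (· ≤ ·) ++ T.sort (· ≤ ·)).Nodup := by
    rw [List.nodup_append]
    refine ⟨Finset.sort_nodup _ _, Finset.sort_nodup _ _, ?_⟩
    intro a ha b hb hab
    subst hab
    exact (Finset.disjoint_left.1 h) ((Finset.mem_sort (α := Fin n) (· ≤ ·)).1 ha) ((Finset.mem_sort (α := Fin n) (· ≤ ·)).1 hb)
  obtain ⟨ε, hε, hmon⟩ := mon_nodup (k := k) _ hnd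
  refine ⟨ε, hε, ?_⟩
  rw [happ, hmon]
  congr 1
  rw [List.toFinset_append, Finset.sort_toFinset, Finset.sort_toFinset]

lemma bS_mul_bS_not_disjoint {S T : Finset (Fin n)} (h : ¬Disjoint S T) :
    bS k S * bS k T = 0 := by
  have happ : bS k S * bS k T = mon k (S.sort (· ≤ ·) ++ T.sort (· ≤ ·)) := by
    rw [mon_append, bS, bS]
  rw [happ]
  apply mon_not_nodup
  intro hnd
  rw [List.nodup_append] at hnd
  obtain ⟨a, haS, haT⟩ := Finset.not_disjoint_iff.1 h
  exact hnd.2.2 _ ((Finset.mem_sort (α := Fin n) (· ≤ ·)).2 haS)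
    _ ((Finset.mem_sort (α := Fin n) (· ≤ ·)).2 haT) rfl

lemma ι_eq_sum_gen (v : Fin n → k) :
    ExteriorAlgebra.ι k v = ∑ i, v i • gen k i := by
  have hv : v = ∑ i, v i • (Pi.single i (1:k) : Fin n → k) := by
    funext j
    rw [Finset.sum_apply]
    simp [Pi.single_apply]
  conv_lhs => rw [hv]
  rw [map_sum]
  congr 1
  funext i
  rw [map_smul, gen]

lemma span_bS : Submodule.span k (Set.range (bS k (n := n))) = ⊤ := by
  set W := Submodule.span k (Set.range (bS k (n := n))) with hW
  have h1 : (1 : ExteriorAlgebra k (Fin n → k)) ∈ W := by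
    rw [← bS_empty]
    exact Submodule.subset_span ⟨∅, rfl⟩
  have hgen : ∀ (i : Fin n) (y : ExteriorAlgebra k (Fin n → k)), y ∈ W → gen k i * y ∈ W := by
    intro i y hy
    refine Submodule.span_induction ?_ ?_ ?_ ?_ hy
    · rintro x ⟨S, rfl⟩
      by_cases h : i ∈ S
      · rw [gen_mul_bS_mem h]; exact W.zero_mem
      · obtain ⟨ε, _, hmul⟩ := gen_mul_bS_not_mem (k := k) h
        rw [hmul]
        exact W.smul_mem _ (Submodule.subset_span ⟨_, rfl⟩)
    · rw [mul_zero]; exact W.zero_mem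
    · intro x y _ _ hx hy
      rw [mul_add]; exact W.add_mem hx hy
    · intro a x _ hx
      rw [mul_smul_comm]; exact W.smul_mem _ hx
  have hι : ∀ (v : Fin n → k) (y : ExteriorAlgebra k (Fin n → k)), y ∈ W →
      ExteriorAlgebra.ι k v * y ∈ W := by
    intro v y hy
    rw [ι_eq_sum_gen, Finset.sum_mul]
    apply Submodule.sum_mem
    intro i _
    rw [smul_mul_assoc]
    exact W.smul_mem _ (hgen i y hy)
  rw [eq_top_iff]
  intro x _
  have key : ∀ x : ExteriorAlgebra k (Fin n → k),
      ∀ y ∈ W, x * y ∈ W := by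
    intro x
    induction x using ExteriorAlgebra.induction with
    | algebraMap r => intro y hy; rw [← Algebra.smul_def]; exact W.smul_mem r hy
    | ι v => exact hι v
    | mul a b ha hb => intro y hy; rw [mul_assoc]; exact ha _ (hb y hy)
    | add a b ha hb => intro y hy; rw [add_mul]; exact W.add_mem (ha y hy) (hb y hy)
  simpa using key x 1 h1


/-- The basis of the exterior algebra indexed by finsets. -/
noncomputable def B (k : Type) [Field k] (n : ℕ) :
    Module.Basis (Finset (Fin n)) k (ExteriorAlgebra k (Fin n → k)) :=
  Module.Basis.mk linearIndependent_bS (le_of_eq span_bS.symm)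

lemma coe_B : ⇑(B k n) = bS k := Module.Basis.coe_mk _ _

lemma card_even_filter (hn : 1 ≤ n) :
    (Finset.univ.filter (fun S : Finset (Fin n) => Even S.card)).card = 2 ^ (n - 1) := by
  classical
  set z : Fin n := ⟨0, hn⟩ with hz
  set g : Finset (Fin n) → Finset (Fin n) := fun S => if z ∈ S then S.erase z else insert z S
    with hg
  have hinv : ∀ S, g (g S) = S := by
    intro S
    by_cases h : z ∈ S
    · simp only [hg, if_pos h, if_neg (Finset.notMem_erase z S)]
      exact Finset.insert_erase h
    · simp only [hg, if_neg h, if_pos (Finset.mem_insert_self z S)]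
      exact Finset.erase_insert h
  have hpar : ∀ S : Finset (Fin n), Even S.card → ¬Even (g S).card := by
    intro S hS
    by_cases h : z ∈ S
    · rw [hg]
      simp only [if_pos h, Finset.card_erase_of_mem h]
      have hc : 1 ≤ S.card := Finset.card_pos.2 ⟨z, h⟩
      obtain ⟨m, hm⟩ := hS
      intro hcon
      obtain ⟨l, hl⟩ := hcon
      omega
    · rw [hg]
      simp only [if_neg h, Finset.card_insert_of_notMem h]
      obtain ⟨m, hm⟩ := hS
      intro hcon
      obtain ⟨l, hl⟩ := hcon
      omega
  have hpar' : ∀ S : Finset (Fin n), ¬Even S.card → Even (g S).card := by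
    intro S hS
    by_cases h : z ∈ S
    · rw [hg]
      simp only [if_pos h, Finset.card_erase_of_mem h]
      have hc : 1 ≤ S.card := Finset.card_pos.2 ⟨z, h⟩
      rw [Nat.even_sub hc]
      simp [hS, Nat.not_even_iff_odd]
    · rw [hg]
      simp only [if_neg h, Finset.card_insert_of_notMem h]
      rw [Nat.even_add_one]
      exact fun hcon => hS hcon
  have hcardeq : (Finset.univ.filter (fun S : Finset (Fin n) => Even S.card)).card
      = (Finset.univ.filter (fun S : Finset (Fin n) => ¬Even S.card)).card := by
    apply Finset.card_bij' (fun S _ => g S) (fun S _ => g S)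
    · intro S hS
      simp only [Finset.mem_filter, Finset.mem_univ, true_and] at hS ⊢
      exact hpar S hS
    · intro S hS
      simp only [Finset.mem_filter, Finset.mem_univ, true_and] at hS ⊢
      exact hpar' S hS
    · intro S _; exact hinv S
    · intro S _; exact hinv S
  have hsum := Finset.card_filter_add_card_filter_not
    (s := (Finset.univ : Finset (Finset (Fin n))))
    (p := fun S : Finset (Fin n) => Even S.card)
  have huniv : (Finset.univ : Finset (Finset (Fin n))).card = 2 ^ n := by
    rw [Finset.card_univ, Fintype.card_finset, Fintype.card_fin]
  have hpow : 2 ^ n = 2 ^ (n - 1) * 2 := by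
    rw [← pow_succ, Nat.sub_add_cancel hn]
  omega


/-- Span of the even-degree monomials of degree at least 2. -/
noncomputable def Dsub (k : Type) [Field k] (n : ℕ) : Submodule k (ExteriorAlgebra k (Fin n → k)) :=
  Submodule.span k (bS k '' {S : Finset (Fin n) | Even S.card ∧ 2 ≤ S.card})

lemma pair_mem_Dsub (S T : Finset (Fin n)) :
    bS k S * bS k T - bS k T * bS k S ∈ Dsub k n := by
  have hcomm : bS k T * bS k S
      = ((-1 : k) ^ (T.card * S.card)) • (bS k S * bS k T) := by
    have := mon_mul_mon (k := k) (S.sort (· ≤ ·)) (T.sort (· ≤ ·))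
    rwa [Finset.length_sort, Finset.length_sort] at this
  by_cases hev : Even (T.card * S.card)
  · rw [hcomm, hev.neg_one_pow, one_smul, sub_self]
    exact (Dsub k n).zero_mem
  · have hodd : Odd (T.card * S.card) := Nat.not_even_iff_odd.1 hev
    rw [hcomm, hodd.neg_one_pow, neg_one_smul, sub_neg_eq_add]
    by_cases hdisj : Disjoint S T
    · obtain ⟨ε, hε, hmul⟩ := bS_mul_bS_disjoint (k := k) hdisj
      rw [hmul, ← add_smul]
      apply Submodule.smul_mem
      apply Submodule.subset_span
      refine ⟨S ∪ T, ?_, rfl⟩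
      have hTcard : Odd T.card := (Nat.odd_mul.1 hodd).1
      have hScard : Odd S.card := (Nat.odd_mul.1 hodd).2
      have hcup : (S ∪ T).card = S.card + T.card := Finset.card_union_of_disjoint hdisj
      constructor
      · rw [hcup]; exact hScard.add_odd hTcard
      · have := hScard.pos; have := hTcard.pos; omega
    · rw [bS_mul_bS_not_disjoint (k := k) hdisj, add_zero]
      exact (Dsub k n).zero_mem

lemma comm_mem_Dsub (a y : ExteriorAlgebra k (Fin n → k)) : a * y - y * a ∈ Dsub k n := by
  have ha : a ∈ Submodule.span k (Set.range (bS k (n := n))) := by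
    rw [span_bS]; exact Submodule.mem_top
  refine Submodule.span_induction
    (p := fun a _ => ∀ y : ExteriorAlgebra k (Fin n → k), a * y - y * a ∈ Dsub k n)
    ?_ ?_ ?_ ?_ ha y
  · rintro x ⟨S, rfl⟩ y
    have hy : y ∈ Submodule.span k (Set.range (bS k (n := n))) := by
      rw [span_bS]; exact Submodule.mem_top
    refine Submodule.span_induction
      (p := fun y _ => bS k S * y - y * bS k S ∈ Dsub k n) ?_ ?_ ?_ ?_ hy
    · rintro z ⟨T, rfl⟩
      exact pair_mem_Dsub S T
    · simp only [mul_zero, zero_mul, sub_zero]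
      exact (Dsub k n).zero_mem
    · intro u v _ _ hu hv
      have heq : bS k S * (u + v) - (u + v) * bS k S
          = (bS k S * u - u * bS k S) + (bS k S * v - v * bS k S) := by noncomm_ring
      rw [heq]; exact (Dsub k n).add_mem hu hv
    · intro c u _ hu
      have heq : bS k S * (c • u) - (c • u) * bS k S = c • (bS k S * u - u * bS k S) := by
        rw [mul_smul_comm, smul_mul_assoc, smul_sub]
      rw [heq]; exact (Dsub k n).smul_mem c hu
  · intro y
    simp only [zero_mul, mul_zero, sub_zero]
    exact (Dsub k n).zero_mem
  · intro u v _ _ hu hv y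
    have heq : (u + v) * y - y * (u + v) = (u * y - y * u) + (v * y - y * v) := by noncomm_ring
    rw [heq]; exact (Dsub k n).add_mem (hu y) (hv y)
  · intro c u _ hu y
    have heq : (c • u) * y - y * (c • u) = c • (u * y - y * u) := by
      rw [smul_mul_assoc, mul_smul_comm, smul_sub]
    rw [heq]; exact (Dsub k n).smul_mem c (hu y)


lemma bS_mem_comm_span (h2 : (2 : k) ≠ 0) {S : Finset (Fin n)}
    (heven : Even S.card) (hcard : 2 ≤ S.card) :
    bS k S ∈ Submodule.span k
      {z : ExteriorAlgebra k (Fin n → k) | ∃ a b, z = a * b - b * a} := by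
  have hne : S.Nonempty := Finset.card_pos.1 (by omega)
  obtain ⟨i, hi⟩ := hne
  set S' := S.erase i with hS'
  have hdisj : Disjoint {i} S' := by
    rw [Finset.disjoint_singleton_left]
    exact Finset.notMem_erase i S
  obtain ⟨ε, hε, hmul⟩ := bS_mul_bS_disjoint (k := k) hdisj
  have hunion : ({i} : Finset (Fin n)) ∪ S' = S := by
    rw [show ({i} : Finset (Fin n)) ∪ S' = insert i S' from rfl, Finset.insert_erase hi]
  rw [hunion] at hmul
  have hcomm : bS k S' * bS k {i}
      = ((-1 : k) ^ (S'.card * ({i} : Finset (Fin n)).card)) • (bS k {i} * bS k S') := by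
    have := mon_mul_mon (k := k) (({i} : Finset (Fin n)).sort (· ≤ ·)) (S'.sort (· ≤ ·))
    rwa [Finset.length_sort, Finset.length_sort] at this
  have hS'odd : Odd S'.card := by
    rw [hS', Finset.card_erase_of_mem hi]
    obtain ⟨m, hm⟩ := heven
    exact ⟨m - 1, by omega⟩
  have hoddmul : Odd (S'.card * ({i} : Finset (Fin n)).card) := by
    rw [Finset.card_singleton, mul_one]
    exact hS'odd
  rw [hoddmul.neg_one_pow, neg_one_smul] at hcomm
  have hz : bS k {i} * bS k S' - bS k S' * bS k {i} = (2 * ε) • bS k S := by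
    rw [hcomm, sub_neg_eq_add, hmul, ← add_smul]
    congr 1
    ring
  have hzC : bS k {i} * bS k S' - bS k S' * bS k {i} ∈ Submodule.span k
      {z : ExteriorAlgebra k (Fin n → k) | ∃ a b, z = a * b - b * a} :=
    Submodule.subset_span ⟨bS k {i}, bS k S', rfl⟩
  have hne2 : (2 * ε : k) ≠ 0 := by
    rcases hε with rfl | rfl
    · simpa using h2
    · simpa using h2
  have hrw : bS k S = (2 * ε : k)⁻¹ • (bS k {i} * bS k S' - bS k S' * bS k {i}) := by
    rw [hz, smul_smul, inv_mul_cancel₀ hne2, one_smul]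
  rw [hrw]
  exact Submodule.smul_mem _ _ hzC

lemma finrank_Dsub (hn : 1 ≤ n) : Module.finrank k (Dsub k n) = 2 ^ (n - 1) - 1 := by
  classical
  have hli : LinearIndependent k
      (fun s : {S : Finset (Fin n) // Even S.card ∧ 2 ≤ S.card} =>
        bS k (s : Finset (Fin n))) :=
    (linearIndependent_bS (k := k) (n := n)).comp Subtype.val Subtype.val_injective
  have BD := Module.Basis.span hli
  rw [show Set.range (fun s : {S : Finset (Fin n) // Even S.card ∧ 2 ≤ S.card} =>
        bS k (s : Finset (Fin n)))
      = bS k '' {S : Finset (Fin n) | Even S.card ∧ 2 ≤ S.card} from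
    (Set.image_eq_range _ _).symm] at BD
  rw [Dsub, Module.finrank_eq_card_basis BD, Fintype.card_subtype]
  have hErase : Finset.univ.filter (fun S : Finset (Fin n) => Even S.card ∧ 2 ≤ S.card)
      = (Finset.univ.filter (fun S : Finset (Fin n) => Even S.card)).erase ∅ := by
    ext S
    simp only [Finset.mem_filter, Finset.mem_univ, true_and, Finset.mem_erase]
    constructor
    · rintro ⟨he, hc⟩
      refine ⟨fun hS => ?_, he⟩
      rw [hS] at hc
      simp at hc
    · rintro ⟨hne, he⟩
      refine ⟨he, ?_⟩
      have hc0 : S.card ≠ 0 := fun h0 => hne (Finset.card_eq_zero.1 h0)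
      obtain ⟨m, hm⟩ := he
      omega
  rw [hErase, Finset.card_erase_of_mem, card_even_filter hn]
  simp

lemma finrank_total : Module.finrank k (ExteriorAlgebra k (Fin n → k)) = 2 ^ n := by
  rw [Module.finrank_eq_card_basis (B k n), Fintype.card_finset, Fintype.card_fin]

end ExtComm


open ExtComm

/-- Let `k` be a field with `char k ≠ 2` and `Λ` the exterior algebra on `n ≥ 2`
generators over `k`.  The commutator subspace `[Λ,Λ]` (the `k`-span of all `ab - ba`)
has dimension `2^{n-1} - 1`, and `dim_k Λ/[Λ,Λ] = 2^{n-1} + 1`. -/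
theorem commutator_subspace_dim (k : Type) [Field k] (hk : ringChar k ≠ 2)
    (n : ℕ) (hn : 2 ≤ n)
    (C : Submodule k (ExteriorAlgebra k (Fin n → k)))
    (hC : C = Submodule.span k
      {z | ∃ a b : ExteriorAlgebra k (Fin n → k), z = a * b - b * a}) :
    Module.finrank k C = 2 ^ (n - 1) - 1 ∧
      Module.finrank k (ExteriorAlgebra k (Fin n → k) ⧸ C) = 2 ^ (n - 1) + 1 := by
  have hn1 : 1 ≤ n := le_trans (by norm_num) hn
  have h2 : (2 : k) ≠ 0 := Ring.two_ne_zero hk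
  haveI : FiniteDimensional k (ExteriorAlgebra k (Fin n → k)) :=
    Module.Finite.of_basis (B k n)
  have hCD : C = Dsub k n := by
    apply le_antisymm
    · rw [hC]
      apply Submodule.span_le.2
      rintro z ⟨a, b, rfl⟩
      exact comm_mem_Dsub a b
    · rw [Dsub]
      apply Submodule.span_le.2
      rintro x ⟨S, ⟨heven, hcard⟩, rfl⟩
      rw [hC]
      exact bS_mem_comm_span h2 heven hcard
  have hfinC : Module.finrank k C = 2 ^ (n - 1) - 1 := by
    rw [hCD, finrank_Dsub hn1]
  have hquot := Submodule.finrank_quotient_add_finrank C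
  rw [finrank_total, hfinC] at hquot
  have hpow : 2 ^ n = 2 ^ (n - 1) * 2 := by
    rw [← pow_succ, Nat.sub_add_cancel hn1]
  have hge : 2 ≤ 2 ^ (n - 1) := by
    calc 2 = 2 ^ 1 := (pow_one 2).symm
    _ ≤ 2 ^ (n - 1) := Nat.pow_le_pow_right (by norm_num) (by omega)
  exact ⟨hfinC, by omega⟩
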